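/- Let Σ be an n×n real PSD matrix with unit diagonal, let w: E → ℝ≥0 be nonnegative weights on a finite edge set E ⊆ {1..n}², and suppose Σ_{ij} < 1 for all (i,j) ∈ E with w_{ij} > 0. Then the ratio [(1/π) Σ_{(i,j)∈E} w_{ij} arccos(Σ_{ij})] / [(1/2) Σ_{(i,j)∈E} w_{ij} (1 - Σ_{ij})] is at least 0.878. -/

import Mathlib

open Real

lemma my_sin_ge (x : ℝ) (hx : 0 ≤ x) : x - x ^ 3 / 6 ≤ sin x := by
  have hmono : Monotone (fun x : ℝ => sin x - (x - x ^ 3 / 6)) := by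
    apply monotone_of_deriv_nonneg
    · fun_prop
    · intro y
      have hd : HasDerivAt (fun x : ℝ => sin x - (x - x ^ 3 / 6))
          (cos y - (1 - 3 * y ^ 2 / 6)) y := by
        exact (hasDerivAt_sin y).sub ((hasDerivAt_id y).sub ((hasDerivAt_pow 3 y).div_const 6))
      rw [hd.deriv]
      have := Real.one_sub_sq_div_two_le_cos (x := y)
      nlinarith
  have := hmono hx
  simpa using this

lemma my_cos_le (x : ℝ) (hx : 0 ≤ x) : cos x ≤ 1 - x ^ 2 / 2 + x ^ 4 / 24 := by
  have hdiff : Differentiable ℝ (fun x : ℝ => (1 - x ^ 2 / 2 + x ^ 4 / 24) - cos x) := by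
    fun_prop
  have hmono : MonotoneOn (fun x : ℝ => (1 - x ^ 2 / 2 + x ^ 4 / 24) - cos x) (Set.Ici 0) := by
    apply monotoneOn_of_deriv_nonneg (convex_Ici 0) hdiff.continuous.continuousOn
      hdiff.differentiableOn
    intro y hy
    rw [interior_Ici] at hy
    have hd : HasDerivAt (fun x : ℝ => (1 - x ^ 2 / 2 + x ^ 4 / 24) - cos x)
        ((0 - 2 * y ^ 1 / 2 + 4 * y ^ 3 / 24) - (- sin y)) y := by
      exact ((((hasDerivAt_const y (1:ℝ)).sub ((hasDerivAt_pow 2 y).div_const 2)).add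
        ((hasDerivAt_pow 4 y).div_const 24)).sub (hasDerivAt_cos y))
    rw [hd.deriv]
    have := my_sin_ge y hy.le
    nlinarith
  have := hmono (Set.self_mem_Ici) (Set.mem_Ici.2 hx) hx
  simp only [Real.cos_zero] at this
  nlinarith [this]

set_option maxHeartbeats 1000000 in
lemma my_key (x : ℝ) (h1 : -1 ≤ x) (h2 : x ≤ 1) :
    0.878 * ((1 / 2) * (1 - x)) ≤ (1 / π) * arccos x := by
  have hπl := Real.pi_gt_d6
  have hπu := Real.pi_lt_d6
  rw [show (1:ℝ)/π * arccos x = arccos x / π from by ring, le_div_iff₀ Real.pi_pos]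
  set θ : ℝ := 0.439 * π * (1 - x) with hθ
  have hθ0 : 0 ≤ θ := by
    rw [hθ]
    have : (0:ℝ) ≤ 1 - x := by linarith
    positivity
  have hθπ : θ ≤ π := by
    nlinarith [mul_nonneg Real.pi_pos.le (show (0:ℝ) ≤ 1 - 0.439*(1-x) by nlinarith)]
  have hxcos : x ≤ cos θ := by
    rcases le_or_gt (1 - x) 1 with ht | ht
    · have hq := Real.one_sub_sq_div_two_le_cos (x := θ)
      have hθsq : θ^2 = 0.439^2 * π^2 * (1-x)^2 := by rw [hθ]; ring
      have hππ : π^2 < 9.8696099 := by nlinarith [Real.pi_pos]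
      have h3 : θ ^ 2 / 2 ≤ 1 - x := by
        nlinarith [mul_nonneg (show (0:ℝ) ≤ 1-x by linarith) (show (0:ℝ) ≤ x by linarith)]
      linarith
    · set v : ℝ := π - θ with hv
      have hv0 : 0.3832 ≤ v := by
        rw [hv, hθ]
        nlinarith [mul_nonneg (show (0:ℝ) ≤ π - 3.141592 by linarith)
          (show (0:ℝ) ≤ 2 - (1-x) by linarith)]
      have hv1 : v ≤ 1.7625 := by
        rw [hv, hθ]
        nlinarith [mul_nonneg (show (0:ℝ) ≤ π - 3.141592 by linarith)
          (show (0:ℝ) ≤ (1-x) - 1 by linarith)]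
      have hcv : cos θ = - cos v := by
        have : θ = π - v := by rw [hv]; ring
        rw [this, Real.cos_pi_sub]
      have hcu := my_cos_le v (by linarith)
      have hr : (0:ℝ) ≤ 1/2 - (v^2 + 2*0.8155*v + 3*0.8155^2)/24 := by
        nlinarith [mul_nonneg (show (0:ℝ) ≤ v - 0.3832 by linarith)
          (show (0:ℝ) ≤ 1.7625 - v by linarith)]
      have hcert : v ≤ 3.141592 * (1 - 0.439 * (2 - v^2/2 + v^4/24)) := by
        nlinarith [mul_nonneg (sq_nonneg (v - 0.8155)) hr]
      have hcoef : (0:ℝ) ≤ 1 - 0.439 * (2 - v^2/2 + v^4/24) := by nlinarith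
      have hπc : 3.141592 * (1 - 0.439 * (2 - v^2/2 + v^4/24))
          ≤ π * (1 - 0.439 * (2 - v^2/2 + v^4/24)) :=
        mul_le_mul_of_nonneg_right (by linarith) hcoef
      have hrel : 0.439 * π * (1 - x) = π - v := by rw [hv, hθ]; ring
      have hchain : 0.439 * π * (2 - v^2/2 + v^4/24) ≤ 0.439 * π * (1 - x) := by
        linarith [hcert, hπc, hrel]
      have h5 : 2 - v^2/2 + v^4/24 ≤ 1 - x := by
        have hpos : (0:ℝ) < 0.439 * π := by positivity
        exact le_of_mul_le_mul_left hchain hpos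
      have h6 : cos v ≤ - x := by linarith
      linarith [hcv]
  have hmem1 : cos θ ∈ Set.Icc (-1:ℝ) 1 := ⟨Real.neg_one_le_cos θ, Real.cos_le_one θ⟩
  have hmem2 : x ∈ Set.Icc (-1:ℝ) 1 := ⟨h1, h2⟩
  have hfin := (Real.strictAntiOn_arccos.le_iff_ge hmem1 hmem2).2 hxcos
  rw [Real.arccos_cos hθ0 hθπ] at hfin
  calc 0.878 * ((1/2) * (1 - x)) * π = θ := by rw [hθ]; ring
    _ ≤ arccos x := hfin

lemma my_entry (n : ℕ) (S : Matrix (Fin n) (Fin n) ℝ)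
    (hS : S.PosSemidef) (hdiag : ∀ i, S i i = 1) (i j : Fin n) :
    -1 ≤ S i j ∧ S i j ≤ 1 := by
  rcases eq_or_ne i j with rfl | hij
  · rw [hdiag i]; norm_num
  · have hsym : S j i = S i j := by
      have := hS.1.apply i j
      simpa using this
    have key : ∀ c : ℝ, 0 ≤ S i i + c * S i j + c * S j i + c * c * S j j := by
      intro c
      have h := hS.dotProduct_mulVec_nonneg (Pi.single i 1 + Pi.single j c)
      simp only [star_trivial] at h
      simp only [Matrix.mulVec_add, Matrix.mulVec_single, add_dotProduct,
        dotProduct_add, single_dotProduct, dotProduct_single,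
        Pi.add_apply, mul_one, one_mul] at h
      simp only [Pi.smul_apply, op_smul_eq_mul, Matrix.col_apply, mul_one] at h
      linarith [h]
    have h1 := key 1
    have h2 := key (-1)
    rw [hdiag i, hdiag j, hsym] at h1 h2
    constructor <;> nlinarith

/-- Goemans–Williamson ratio for weighted Max-Cut: if `Σ` is PSD with unit diagonal,
weights are nonnegative, and `Σ i j < 1` on edges with positive weight, then the
expected rounded cut `(1/π) ∑ w arccos Σ` is at least `0.878` times the expected
measured cut `(1/2) ∑ w (1 - Σ)`. -/
theorem stmt_12 (n : ℕ) (S : Matrix (Fin n) (Fin n) ℝ)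
    (hS : S.PosSemidef) (hdiag : ∀ i, S i i = 1)
    (E : Finset (Fin n × Fin n)) (w : Fin n × Fin n → ℝ) (hw : ∀ e ∈ E, 0 ≤ w e)
    (hlt : ∀ e ∈ E, 0 < w e → S e.1 e.2 < 1) :
    0.878 * ((1 / 2) * ∑ e ∈ E, w e * (1 - S e.1 e.2)) ≤
      (1 / π) * ∑ e ∈ E, w e * arccos (S e.1 e.2) := by
  have hterm : ∀ e ∈ E, 0.878 * ((1 / 2) * (w e * (1 - S e.1 e.2)))
      ≤ (1 / π) * (w e * arccos (S e.1 e.2)) := by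
    intro e he
    obtain ⟨hb1, hb2⟩ := my_entry n S hS hdiag e.1 e.2
    have hkey : 0.878 * ((1 / 2) * (1 - S e.1 e.2)) ≤ (1 / π) * arccos (S e.1 e.2) :=
      my_key _ hb1 hb2
    have := mul_le_mul_of_nonneg_left hkey (hw e he)
    calc 0.878 * ((1 / 2) * (w e * (1 - S e.1 e.2)))
        = w e * (0.878 * ((1 / 2) * (1 - S e.1 e.2))) := by ring
      _ ≤ w e * ((1 / π) * arccos (S e.1 e.2)) := this
      _ = (1 / π) * (w e * arccos (S e.1 e.2)) := by ring
  calc 0.878 * ((1 / 2) * ∑ e ∈ E, w e * (1 - S e.1 e.2))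
      = ∑ e ∈ E, 0.878 * ((1 / 2) * (w e * (1 - S e.1 e.2))) := by
        rw [← Finset.mul_sum, ← Finset.mul_sum]
    _ ≤ ∑ e ∈ E, (1 / π) * (w e * arccos (S e.1 e.2)) := Finset.sum_le_sum hterm
    _ = (1 / π) * ∑ e ∈ E, w e * arccos (S e.1 e.2) := by rw [← Finset.mul_sum]
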